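/- Let M be an o-minimal expansion of a real closed field and A ⊆ M^k definable. Then A is definably compact (closed and bounded) if and only if for every definable set B and every definable continuous f : A → B, the image f(A) is closed in B. -/

import Mathlib

open FirstOrder Set Classical

/-- `Defin L M s` : the set `s ⊆ Mᵏ` is definable in the structure `M` with parameters from `M`. -/
def Defin (L : FirstOrder.Language) (M : Type) [L.Structure M] {k : ℕ}
    (s : Set (Fin k → M)) : Prop :=
  Set.Definable (Set.univ : Set M) L s

/-- `M` is an o-minimal structure: the order is definable, and every definable subset of `M`
is a finite union of points and open intervals (possibly unbounded). -/
def IsOMin (L : FirstOrder.Language) (M : Type) [L.Structure M] [LinearOrder M] : Prop :=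
  Set.Definable (Set.univ : Set M) L {p : Fin 2 → M | p 0 < p 1} ∧
  ∀ s : Set (Fin 1 → M), Defin L M s →
    ∃ (F : Finset M) (n : ℕ) (J : Fin n → Set M),
      (∀ i, (∃ a b, J i = Set.Ioo a b) ∨ (∃ a, J i = Set.Ioi a) ∨
            (∃ b, J i = Set.Iio b) ∨ J i = Set.univ) ∧
      (fun p : Fin 1 → M => p 0) '' s = ↑F ∪ ⋃ i, J i

/-- `M` expands an ordered group: the graph of addition is definable. -/
def ExpandsGroup (L : FirstOrder.Language) (M : Type) [L.Structure M] [Add M] : Prop :=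
  Set.Definable (Set.univ : Set M) L {p : Fin 3 → M | p 0 + p 1 = p 2}

/-- `M` expands a (real closed, by o-minimality) field: graphs of `+` and `*` are definable. -/
def ExpandsField (L : FirstOrder.Language) (M : Type) [L.Structure M] [Add M] [Mul M] : Prop :=
  Set.Definable (Set.univ : Set M) L {p : Fin 3 → M | p 0 + p 1 = p 2} ∧
  Set.Definable (Set.univ : Set M) L {p : Fin 3 → M | p 0 * p 1 = p 2}

/-- o-minimal dimension of a subset of `Mᵏ` : the largest `d` such that some coordinate
projection onto `M^d` has nonempty interior; `-1` for the empty set. -/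

noncomputable def odim {M : Type} [TopologicalSpace M] {k : ℕ} (s : Set (Fin k → M)) : ℤ :=
  if s.Nonempty then
    ((sSup {d : ℕ | ∃ f : Fin d → Fin k, Function.Injective f ∧
      (interior ((fun x : Fin k → M => x ∘ f) '' s)).Nonempty} : ℕ) : ℤ)
  else -1


section Toolkit

variable {L : FirstOrder.Language} {M : Type} [L.Structure M]

/-- Definable predicate (with parameters from all of `M`). -/
def Df (L : FirstOrder.Language) (M : Type) [L.Structure M] {α : Type}
    (P : (α → M) → Prop) : Prop :=
  Set.Definable (Set.univ : Set M) L {p : α → M | P p}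

namespace Df

variable {α β : Type} {P Q : (α → M) → Prop}

theorem congr (h : ∀ p, P p ↔ Q p) (hP : Df L M P) : Df L M Q := by
  have : {p : α → M | P p} = {p | Q p} := Set.ext fun p => h p
  rwa [Df, ← this]

theorem and (hP : Df L M P) (hQ : Df L M Q) : Df L M fun p => P p ∧ Q p := hP.inter hQ

theorem or (hP : Df L M P) (hQ : Df L M Q) : Df L M fun p => P p ∨ Q p := hP.union hQ

theorem not (hP : Df L M P) : Df L M fun p => ¬ P p := hP.compl

theorem imp (hP : Df L M P) (hQ : Df L M Q) : Df L M fun p => P p → Q p :=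
  (hP.not.or hQ).congr fun p => by tauto

theorem true_ : Df L M (fun _ : α → M => True) := by
  have : ({p : α → M | True}) = Set.univ := by ext p; simp
  rw [Df, this]; exact Set.definable_univ

theorem all_fin {ι : Type} [Fintype ι] {P : ι → (α → M) → Prop}
    (h : ∀ i, Df L M (P i)) : Df L M fun p => ∀ i, P i p := by
  have h2 := Set.definable_biInter_finset (A := (Set.univ : Set M)) (L := L)
    (f := fun i => {p : α → M | P i p}) (fun i => h i) Finset.univ
  have : (⋂ i ∈ Finset.univ, {p : α → M | P i p}) = {p : α → M | ∀ i, P i p} := by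
    ext p; simp
  rwa [this] at h2

theorem comap {s : Set (β → M)} (h : Set.Definable Set.univ L s) (f : β → α) :
    Df L M fun p : α → M => p ∘ f ∈ s := h.preimage_comp f

theorem ex [Finite α] [Finite β] {P : (α ⊕ β → M) → Prop} (h : Df L M P) :
    Df L M fun p : α → M => ∃ q : β → M, P (Sum.elim p q) := by
  have h2 := Set.Definable.image_comp (f := (Sum.inl : α → α ⊕ β)) h
  have : ((fun g : α ⊕ β → M => g ∘ Sum.inl) '' {p | P p}) =
      {p : α → M | ∃ q : β → M, P (Sum.elim p q)} := by
    ext p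
    constructor
    · rintro ⟨g, hg, rfl⟩
      exact ⟨g ∘ Sum.inr, by rwa [Sum.elim_comp_inl_inr]⟩
    · rintro ⟨q, hq⟩
      exact ⟨Sum.elim p q, hq, rfl⟩
  rwa [this] at h2

theorem all [Finite α] [Finite β] {P : (α ⊕ β → M) → Prop} (h : Df L M P) :
    Df L M fun p : α → M => ∀ q : β → M, P (Sum.elim p q) :=
  (h.not.ex.not).congr fun p => by push_neg; rfl

theorem eq (x y : α) : Df L M fun p : α → M => p x = p y :=
  ⟨FirstOrder.Language.Term.equal (FirstOrder.Language.Term.var x)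
    (FirstOrder.Language.Term.var y), by ext q; simp⟩

theorem const (x : α) (c : M) : Df L M fun p : α → M => p x = c :=
  ⟨FirstOrder.Language.Term.equal (FirstOrder.Language.Term.var x)
    ((L.con ⟨c, Set.mem_univ _⟩).term), by ext q; simp⟩

theorem subst [Finite α] [Finite β] {P : (α ⊕ β → M) → Prop} (h : Df L M P) (c : β → M) :
    Df L M fun p : α → M => P (Sum.elim p c) := by
  have : Fintype β := Fintype.ofFinite β
  have hQ : Df L M fun q : α ⊕ β → M => P q ∧ ∀ b, q (Sum.inr b) = c b :=
    h.and (Df.all_fin fun b => Df.const (Sum.inr b) (c b))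
  have h2 := Set.Definable.image_comp (f := (Sum.inl : α → α ⊕ β)) hQ
  have hset : ((fun g : α ⊕ β → M => g ∘ Sum.inl) ''
      {q : α ⊕ β → M | P q ∧ ∀ b, q (Sum.inr b) = c b}) =
      {p : α → M | P (Sum.elim p c)} := by
    ext p
    constructor
    · rintro ⟨g, ⟨hg, hgc⟩, rfl⟩
      have hgeq : Sum.elim (g ∘ Sum.inl) c = g := by
        ext (a | b)
        · rfl
        · exact (hgc b).symm
      show P (Sum.elim (g ∘ Sum.inl) c)
      rw [hgeq]; exact hg
    · rintro hq
      exact ⟨Sum.elim p c, ⟨hq, fun b => rfl⟩, rfl⟩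
  rwa [hset] at h2

end Df

end Toolkit

section Atoms

variable {L : FirstOrder.Language} {M : Type} [L.Structure M] [Field M] [LinearOrder M] [IsStrictOrderedRing M]
variable {α : Type}

theorem df_lt (hlt : Set.Definable (Set.univ : Set M) L {p : Fin 2 → M | p 0 < p 1})
    (x y : α) : Df L M fun p : α → M => p x < p y :=
  (Df.comap hlt ![x, y]).congr fun p => by simp

theorem df_le (hlt : Set.Definable (Set.univ : Set M) L {p : Fin 2 → M | p 0 < p 1})
    (x y : α) : Df L M fun p : α → M => p x ≤ p y :=
  ((df_lt hlt y x).not).congr fun p => by simp [not_lt]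

theorem df_add (hadd : Set.Definable (Set.univ : Set M) L {p : Fin 3 → M | p 0 + p 1 = p 2})
    (x y z : α) : Df L M fun p : α → M => p x + p y = p z :=
  (Df.comap hadd ![x, y, z]).congr fun p => by simp

theorem df_mul (hmul : Set.Definable (Set.univ : Set M) L {p : Fin 3 → M | p 0 * p 1 = p 2})
    (x y z : α) : Df L M fun p : α → M => p x * p y = p z :=
  (Df.comap hmul ![x, y, z]).congr fun p => by simp

/-- `p x ≤ p y + p z` -/
theorem df_le_add [Finite α]
    (hlt : Set.Definable (Set.univ : Set M) L {p : Fin 2 → M | p 0 < p 1})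
    (hadd : Set.Definable (Set.univ : Set M) L {p : Fin 3 → M | p 0 + p 1 = p 2})
    (x y z : α) : Df L M fun p : α → M => p x ≤ p y + p z := by
  have inner : Df L M fun q : α ⊕ Fin 1 → M =>
      q (Sum.inl y) + q (Sum.inl z) = q (Sum.inr 0) ∧ q (Sum.inl x) ≤ q (Sum.inr 0) :=
    (df_add hadd _ _ _).and (df_le hlt _ _)
  exact inner.ex.congr fun p => by
    constructor
    · rintro ⟨q, h1, h2⟩
      simp only [Sum.elim_inl, Sum.elim_inr] at h1 h2
      rw [h1]; exact h2
    · intro h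
      exact ⟨fun _ => p y + p z, rfl, h⟩

/-- `0 < p x` -/
theorem df_pos [Finite α]
    (hlt : Set.Definable (Set.univ : Set M) L {p : Fin 2 → M | p 0 < p 1})
    (hadd : Set.Definable (Set.univ : Set M) L {p : Fin 3 → M | p 0 + p 1 = p 2})
    (x : α) : Df L M fun p : α → M => 0 < p x := by
  have inner : Df L M fun q : α ⊕ Fin 1 → M =>
      (q (Sum.inr 0) + q (Sum.inr 0) = q (Sum.inr 0)) ∧ q (Sum.inr 0) < q (Sum.inl x) :=
    (df_add hadd _ _ _).and (df_lt hlt _ _)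
  exact inner.ex.congr fun p => by
    constructor
    · rintro ⟨q, h1, h2⟩
      simp only [Sum.elim_inl, Sum.elim_inr] at h1 h2
      have : q 0 = 0 := by linarith
      rwa [this] at h2
    · intro h
      exact ⟨fun _ => 0, by simp, h⟩

end Atoms

section OneVar

variable {L : FirstOrder.Language} {M : Type} [L.Structure M] [Field M] [LinearOrder M] [IsStrictOrderedRing M]

theorem exists_isLUB_iUnion {ι : Type} [Fintype ι] (g : ι → Set M)
    (h : ∀ i, (g i).Nonempty → ∃ y, IsLUB (g i) y) (hne : (⋃ i, g i).Nonempty) :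
    ∃ y, IsLUB (⋃ i, g i) y := by
  classical
  set T : Finset ι := Finset.univ.filter (fun i => (g i).Nonempty) with hT
  set yof : ι → M := fun i => if h' : (g i).Nonempty then (h i h').choose else 0 with hyof
  have hlub : ∀ i ∈ T, IsLUB (g i) (yof i) := by
    intro i hi
    rw [hT, Finset.mem_filter] at hi
    rw [hyof]; simp only [hi.2, dif_pos]
    exact (h i hi.2).choose_spec
  have hTne : (T.image yof).Nonempty := by
    obtain ⟨x, hx⟩ := hne
    rw [Set.mem_iUnion] at hx
    obtain ⟨i, hi⟩ := hx
    exact ⟨yof i, Finset.mem_image_of_mem _ (by simp [hT]; exact ⟨x, hi⟩)⟩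
  refine ⟨(T.image yof).max' hTne, ?_, ?_⟩
  · intro x hx
    rw [Set.mem_iUnion] at hx
    obtain ⟨i, hi⟩ := hx
    have hiT : i ∈ T := by simp [hT]; exact ⟨x, hi⟩
    exact le_trans ((hlub i hiT).1 hi) (Finset.le_max' _ _ (Finset.mem_image_of_mem _ hiT))
  · intro u hu
    apply Finset.max'_le
    intro y hy
    rw [Finset.mem_image] at hy
    obtain ⟨i, hi, rfl⟩ := hy
    exact (hlub i hi).2 fun x hx => hu (Set.mem_iUnion.2 ⟨i, hx⟩)

theorem exists_isGLB_iUnion {ι : Type} [Fintype ι] (g : ι → Set M)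
    (h : ∀ i, (g i).Nonempty → ∃ y, IsGLB (g i) y) (hne : (⋃ i, g i).Nonempty) :
    ∃ y, IsGLB (⋃ i, g i) y := by
  classical
  set T : Finset ι := Finset.univ.filter (fun i => (g i).Nonempty) with hT
  set yof : ι → M := fun i => if h' : (g i).Nonempty then (h i h').choose else 0 with hyof
  have hlub : ∀ i ∈ T, IsGLB (g i) (yof i) := by
    intro i hi
    rw [hT, Finset.mem_filter] at hi
    rw [hyof]; simp only [hi.2, dif_pos]
    exact (h i hi.2).choose_spec
  have hTne : (T.image yof).Nonempty := by
    obtain ⟨x, hx⟩ := hne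
    rw [Set.mem_iUnion] at hx
    obtain ⟨i, hi⟩ := hx
    exact ⟨yof i, Finset.mem_image_of_mem _ (by simp [hT]; exact ⟨x, hi⟩)⟩
  refine ⟨(T.image yof).min' hTne, ?_, ?_⟩
  · intro x hx
    rw [Set.mem_iUnion] at hx
    obtain ⟨i, hi⟩ := hx
    have hiT : i ∈ T := by simp [hT]; exact ⟨x, hi⟩
    exact le_trans (Finset.min'_le _ _ (Finset.mem_image_of_mem _ hiT)) ((hlub i hiT).1 hi)
  · intro u hu
    apply Finset.le_min'
    intro y hy
    rw [Finset.mem_image] at hy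
    obtain ⟨i, hi, rfl⟩ := hy
    exact (hlub i hi).2 fun x hx => hu (Set.mem_iUnion.2 ⟨i, hx⟩)

end OneVar

section OneVar2

variable {L : FirstOrder.Language} {M : Type} [L.Structure M] [Field M] [LinearOrder M] [IsStrictOrderedRing M]
  [TopologicalSpace M] [OrderTopology M]

theorem set_eq_decomp (hmin : IsOMin L M) {s : Set M}
    (hdef : Set.Definable (Set.univ : Set M) L {p : Fin 1 → M | p 0 ∈ s}) :
    ∃ (F : Finset M) (n : ℕ) (J : Fin n → Set M),
      (∀ i, (∃ a b, J i = Set.Ioo a b) ∨ (∃ a, J i = Set.Ioi a) ∨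
            (∃ b, J i = Set.Iio b) ∨ J i = Set.univ) ∧
      s = ↑F ∪ ⋃ i, J i := by
  obtain ⟨F, n, J, hJ, him⟩ := hmin.2 _ hdef
  refine ⟨F, n, J, hJ, ?_⟩
  rw [← him]
  ext x
  simp only [Set.mem_image, Set.mem_setOf_eq]
  constructor
  · intro hx; exact ⟨fun _ => x, hx, rfl⟩
  · rintro ⟨p, hp, rfl⟩; exact hp

theorem exists_isLUB_of_defin (hmin : IsOMin L M) {s : Set M}
    (hdef : Set.Definable (Set.univ : Set M) L {p : Fin 1 → M | p 0 ∈ s})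
    (hne : s.Nonempty) (hbdd : BddAbove s) : ∃ y, IsLUB s y := by
  obtain ⟨F, n, J, hJ, hs⟩ := set_eq_decomp hmin hdef
  have hs' : s = ⋃ i : ({x // x ∈ F} ⊕ Fin n),
      (Sum.elim (fun a : {x // x ∈ F} => ({a.1} : Set M)) J) i := by
    rw [hs]; ext x
    simp only [Set.mem_union, Set.mem_iUnion, Sum.exists, Sum.elim_inl, Sum.elim_inr,
      Set.mem_singleton_iff, Finset.coe_sort_coe, Finset.mem_coe]
    constructor
    · rintro (hx | hx)
      · exact Or.inl ⟨⟨x, hx⟩, rfl⟩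
      · exact Or.inr hx
    · rintro (⟨a, rfl⟩ | ⟨i, hi⟩)
      · exact Or.inl a.2
      · exact Or.inr ⟨i, hi⟩
  rw [hs'] at hne ⊢
  apply exists_isLUB_iUnion _ _ hne
  rintro (a | i) hne_i
  · exact ⟨a.1, isLUB_singleton⟩
  · simp only [Sum.elim_inr] at hne_i ⊢
    have hsub : J i ⊆ s := by rw [hs]; intro x hx; exact Or.inr (Set.mem_iUnion.2 ⟨i, hx⟩)
    have hbd : BddAbove (J i) := hbdd.mono hsub
    rcases hJ i with ⟨a, b, hab⟩ | ⟨a, ha⟩ | ⟨b, hb⟩ | hu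
    · rw [hab] at hne_i ⊢
      exact ⟨b, isLUB_Ioo (Set.nonempty_Ioo.mp hne_i)⟩
    · exfalso; rw [ha] at hbd; exact not_bddAbove_Ioi a hbd
    · rw [hb]; exact ⟨b, isLUB_Iio⟩
    · exfalso; rw [hu] at hbd
      obtain ⟨u, hu'⟩ := hbd
      exact absurd (hu' (Set.mem_univ (u + 1))) (by simp)

theorem exists_isGLB_of_defin (hmin : IsOMin L M) {s : Set M}
    (hdef : Set.Definable (Set.univ : Set M) L {p : Fin 1 → M | p 0 ∈ s})
    (hne : s.Nonempty) (hbdd : BddBelow s) : ∃ y, IsGLB s y := by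
  obtain ⟨F, n, J, hJ, hs⟩ := set_eq_decomp hmin hdef
  have hs' : s = ⋃ i : ({x // x ∈ F} ⊕ Fin n),
      (Sum.elim (fun a : {x // x ∈ F} => ({a.1} : Set M)) J) i := by
    rw [hs]; ext x
    simp only [Set.mem_union, Set.mem_iUnion, Sum.exists, Sum.elim_inl, Sum.elim_inr,
      Set.mem_singleton_iff, Finset.coe_sort_coe, Finset.mem_coe]
    constructor
    · rintro (hx | hx)
      · exact Or.inl ⟨⟨x, hx⟩, rfl⟩
      · exact Or.inr hx
    · rintro (⟨a, rfl⟩ | ⟨i, hi⟩)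
      · exact Or.inl a.2
      · exact Or.inr ⟨i, hi⟩
  rw [hs'] at hne ⊢
  apply exists_isGLB_iUnion _ _ hne
  rintro (a | i) hne_i
  · exact ⟨a.1, isGLB_singleton⟩
  · simp only [Sum.elim_inr] at hne_i ⊢
    have hsub : J i ⊆ s := by rw [hs]; intro x hx; exact Or.inr (Set.mem_iUnion.2 ⟨i, hx⟩)
    have hbd : BddBelow (J i) := hbdd.mono hsub
    rcases hJ i with ⟨a, b, hab⟩ | ⟨a, ha⟩ | ⟨b, hb⟩ | hu
    · rw [hab] at hne_i ⊢
      exact ⟨a, isGLB_Ioo (Set.nonempty_Ioo.mp hne_i)⟩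
    · rw [ha]; exact ⟨a, isGLB_Ioi⟩
    · exfalso; rw [hb] at hbd; exact not_bddBelow_Iio b hbd
    · exfalso; rw [hu] at hbd
      obtain ⟨u, hu'⟩ := hbd
      exact absurd (hu' (Set.mem_univ (u - 1))) (by simp)

end OneVar2

section Master

variable {L : FirstOrder.Language} {M : Type} [L.Structure M] [Field M] [LinearOrder M] [IsStrictOrderedRing M]
variable {k h : ℕ}

/-- The shrinking family of definable sets used in the forward direction. -/
def Sc (A : Set (Fin k → M)) (f : (Fin k → M) → (Fin h → M)) (b : Fin h → M)
    (i : ℕ) (v : Fin k → M) (t : M) : Set (Fin k → M) :=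
  {x | x ∈ A ∧ (∀ j, f x j ≤ b j + t ∧ b j ≤ f x j + t) ∧
       ∀ l : Fin k, (l : ℕ) < i → (x l ≤ v l + t ∧ v l ≤ x l + t)}

/-- Variable type for the master formula: x-vars, w-vars (= f x), t, b-vars, v-vars. -/
abbrev CS (k h : ℕ) : Type := Fin k ⊕ (Fin h ⊕ (Fin 1 ⊕ (Fin h ⊕ Fin k)))

def csX : Fin k → CS k h := Sum.inl
def csW : Fin h → CS k h := fun j => Sum.inr (Sum.inl j)
def csT : CS k h := Sum.inr (Sum.inr (Sum.inl 0))
def csB : Fin h → CS k h := fun j => Sum.inr (Sum.inr (Sum.inr (Sum.inl j)))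
def csV : Fin k → CS k h := fun l => Sum.inr (Sum.inr (Sum.inr (Sum.inr l)))

theorem df_condS
    (hlt : Set.Definable (Set.univ : Set M) L {p : Fin 2 → M | p 0 < p 1})
    (hadd : Set.Definable (Set.univ : Set M) L {p : Fin 3 → M | p 0 + p 1 = p 2})
    {A : Set (Fin k → M)} (hA : Set.Definable (Set.univ : Set M) L A)
    {f : (Fin k → M) → (Fin h → M)}
    (hG : Set.Definable (Set.univ : Set M) L {p : Fin (k + h) → M |
      f (fun i => p (Fin.castAdd h i)) = fun j => p (Fin.natAdd k j)})
    (i : ℕ) :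
    Df L M fun u : CS k h → M =>
      (u ∘ csX) ∈ A ∧ (f (u ∘ csX) = u ∘ csW) ∧
      (∀ j, u (csW j) ≤ u (csB j) + u csT ∧ u (csB j) ≤ u (csW j) + u csT) ∧
      (∀ l : Fin k, (l : ℕ) < i →
        (u (csX l) ≤ u (csV l) + u csT ∧ u (csV l) ≤ u (csX l) + u csT)) := by
  have d1 : Df L M fun u : CS k h → M => (u ∘ csX) ∈ A := Df.comap hA csX
  have d2 : Df L M fun u : CS k h → M => f (u ∘ csX) = u ∘ csW := by
    have := Df.comap hG (Fin.addCases csX csW : Fin (k + h) → CS k h)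
    refine this.congr fun u => ?_
    have h1 : (fun i' : Fin k => (u ∘ Fin.addCases csX csW) (Fin.castAdd h i')) = u ∘ csX :=
      funext fun i' => congrArg u (Fin.addCases_left i')
    have h2 : (fun j : Fin h => (u ∘ Fin.addCases csX csW) (Fin.natAdd k j)) = u ∘ csW :=
      funext fun j => congrArg u (Fin.addCases_right j)
    show f (fun i' => (u ∘ Fin.addCases csX csW) (Fin.castAdd h i')) =
        (fun j => (u ∘ Fin.addCases csX csW) (Fin.natAdd k j)) ↔ _
    rw [h1, h2]
  have d3 : Df L M fun u : CS k h → M =>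
      ∀ j, u (csW j) ≤ u (csB j) + u csT ∧ u (csB j) ≤ u (csW j) + u csT :=
    Df.all_fin fun j => (df_le_add hlt hadd _ _ _).and (df_le_add hlt hadd _ _ _)
  have d4 : Df L M fun u : CS k h → M =>
      ∀ l : Fin k, (l : ℕ) < i →
        (u (csX l) ≤ u (csV l) + u csT ∧ u (csV l) ≤ u (csX l) + u csT) := by
    refine Df.all_fin fun l => ?_
    by_cases hl : (l : ℕ) < i
    · exact ((df_le_add hlt hadd (csX l) (csV l) csT).and
        (df_le_add hlt hadd (csV l) (csX l) csT)).congr fun u => by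
          simp only [hl, true_implies]
    · exact Df.true_.congr fun u => by simp only [hl, false_implies, iff_true]
  exact d1.and (d2.and (d3.and d4))

end Master

section PstIm

variable {L : FirstOrder.Language} {M : Type} [L.Structure M] [Field M] [LinearOrder M] [IsStrictOrderedRing M]
variable {k h : ℕ}

theorem df_Pst
    (hlt : Set.Definable (Set.univ : Set M) L {p : Fin 2 → M | p 0 < p 1})
    (hadd : Set.Definable (Set.univ : Set M) L {p : Fin 3 → M | p 0 + p 1 = p 2})
    {A : Set (Fin k → M)} (hA : Set.Definable (Set.univ : Set M) L A)
    {f : (Fin k → M) → (Fin h → M)}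
    (hG : Set.Definable (Set.univ : Set M) L {p : Fin (k + h) → M |
      f (fun i => p (Fin.castAdd h i)) = fun j => p (Fin.natAdd k j)})
    (b : Fin h → M) (i : ℕ) (i' : Fin k) (v : Fin k → M) (t : M) :
    Df L M fun y : Fin 1 → M => y 0 ∈ (fun x => x i') '' Sc A f b i v t := by
  classical
  -- index types
  let γ : Type := Fin 1 ⊕ (Fin h ⊕ Fin k)
  let α₀ : Type := Fin 1 ⊕ γ
  let β₀ : Type := Fin k ⊕ Fin h
  let ρ : CS k h → α₀ ⊕ β₀ := Sum.elim (fun l => Sum.inr (Sum.inl l))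
    (Sum.elim (fun j => Sum.inr (Sum.inr j))
      (Sum.elim (fun z => Sum.inl (Sum.inr (Sum.inl z)))
        (Sum.elim (fun j => Sum.inl (Sum.inr (Sum.inr (Sum.inl j))))
          (fun l => Sum.inl (Sum.inr (Sum.inr (Sum.inr l)))))))
  have step1 : Df L M fun p : α₀ ⊕ β₀ → M =>
      ((p ∘ ρ ∘ csX) ∈ A ∧ (f (p ∘ ρ ∘ csX) = p ∘ ρ ∘ csW) ∧
      (∀ j, (p ∘ ρ) (csW j) ≤ (p ∘ ρ) (csB j) + (p ∘ ρ) csT ∧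
            (p ∘ ρ) (csB j) ≤ (p ∘ ρ) (csW j) + (p ∘ ρ) csT) ∧
      (∀ l : Fin k, (l : ℕ) < i →
        ((p ∘ ρ) (csX l) ≤ (p ∘ ρ) (csV l) + (p ∘ ρ) csT ∧
         (p ∘ ρ) (csV l) ≤ (p ∘ ρ) (csX l) + (p ∘ ρ) csT))) := by
    have := Df.comap (df_condS hlt hadd hA hG i) ρ
    exact this.congr fun p => by rw [Set.mem_setOf_eq]; exact Iff.rfl
  have step2 := step1.and (Df.eq (Sum.inl (Sum.inl 0) : α₀ ⊕ β₀) (Sum.inr (Sum.inl i')))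
  have step3 := step2.ex
  have step4 := step3.subst ((Sum.elim (fun _ => t) (Sum.elim b v)) : γ → M)
  refine step4.congr fun y => ?_
  constructor
  · rintro ⟨q, ⟨hqA, hqf, hqd, hqv⟩, hqy⟩
    refine ⟨q ∘ Sum.inl, ⟨hqA, ?_, ?_⟩, hqy.symm⟩
    · intro j
      have := hqd j
      have hw : (Sum.elim (Sum.elim y (Sum.elim (fun _ => t) (Sum.elim b v))) q ∘ ρ ∘ csW) j
          = f (q ∘ Sum.inl) j := by rw [← hqf]; rfl
      exact ⟨by rw [← hw]; exact this.1, by rw [← hw]; exact this.2⟩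
    · intro l hl
      exact hqv l hl
  · rintro ⟨x, hx, hxy⟩
    refine ⟨Sum.elim x (f x), ⟨hx.1, ?_, ?_, ?_⟩, hxy.symm⟩
    · rfl
    · intro j; exact hx.2.1 j
    · intro l hl; exact hx.2.2 l hl

end PstIm

section PstIm2

variable {L : FirstOrder.Language} {M : Type} [L.Structure M] [Field M] [LinearOrder M] [IsStrictOrderedRing M]
variable {k h : ℕ}

theorem df_Im
    (hlt : Set.Definable (Set.univ : Set M) L {p : Fin 2 → M | p 0 < p 1})
    (hadd : Set.Definable (Set.univ : Set M) L {p : Fin 3 → M | p 0 + p 1 = p 2})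
    {A : Set (Fin k → M)} (hA : Set.Definable (Set.univ : Set M) L A)
    {f : (Fin k → M) → (Fin h → M)}
    (hG : Set.Definable (Set.univ : Set M) L {p : Fin (k + h) → M |
      f (fun i => p (Fin.castAdd h i)) = fun j => p (Fin.natAdd k j)})
    (b : Fin h → M) (i : ℕ) (i' : Fin k) (v : Fin k → M) :
    Df L M fun y : Fin 1 → M =>
      ∃ t : M, 0 < t ∧ IsGLB ((fun x => x i') '' Sc A f b i v t) (y 0) := by
  classical
  let LB' : Type := Fin 1 ⊕ (Fin 1 ⊕ (Fin h ⊕ Fin k))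
  let β₀ : Type := Fin k ⊕ Fin h
  let α₁ : Type := Fin 1 ⊕ (Fin h ⊕ Fin k)
  let ρ₂ : CS k h → LB' ⊕ β₀ := Sum.elim (fun l => Sum.inr (Sum.inl l))
    (Sum.elim (fun j => Sum.inr (Sum.inr j))
      (Sum.elim (fun z => Sum.inl (Sum.inr (Sum.inl z)))
        (Sum.elim (fun j => Sum.inl (Sum.inr (Sum.inr (Sum.inl j))))
          (fun l => Sum.inl (Sum.inr (Sum.inr (Sum.inr l)))))))
  let σ₂ : LB' → LB' ⊕ Fin 1 :=
    Sum.elim (fun zz => Sum.inr zz) (fun rest => Sum.inl (Sum.inr rest))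
  let σ₃ : LB' → α₁ ⊕ Fin 1 := Sum.elim (fun yy => Sum.inl (Sum.inl yy))
    (Sum.elim (fun tt => Sum.inr tt) (fun bc => Sum.inl (Sum.inr bc)))
  have dfInner : Df L M fun u : LB' ⊕ β₀ → M =>
      (((u ∘ ρ₂ ∘ csX) ∈ A ∧ (f (u ∘ ρ₂ ∘ csX) = u ∘ ρ₂ ∘ csW) ∧
        (∀ j, (u ∘ ρ₂) (csW j) ≤ (u ∘ ρ₂) (csB j) + (u ∘ ρ₂) csT ∧
              (u ∘ ρ₂) (csB j) ≤ (u ∘ ρ₂) (csW j) + (u ∘ ρ₂) csT) ∧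
        (∀ l : Fin k, (l : ℕ) < i →
          ((u ∘ ρ₂) (csX l) ≤ (u ∘ ρ₂) (csV l) + (u ∘ ρ₂) csT ∧
           (u ∘ ρ₂) (csV l) ≤ (u ∘ ρ₂) (csX l) + (u ∘ ρ₂) csT))) →
        u (Sum.inl (Sum.inl 0)) ≤ u (Sum.inr (Sum.inl i'))) := by
    refine Df.imp ?_ (df_le hlt (Sum.inl (Sum.inl 0)) (Sum.inr (Sum.inl i')))
    exact (Df.comap (df_condS hlt hadd hA hG i) ρ₂).congr fun u => by
      rw [Set.mem_setOf_eq]; exact Iff.rfl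
  have dfLB := dfInner.all
  have dfInner2 := Df.imp
    ((Df.comap dfLB σ₂).congr fun u => by rw [Set.mem_setOf_eq])
    (df_le hlt (Sum.inr 0 : LB' ⊕ Fin 1) (Sum.inl (Sum.inl 0)))
  have dfGLB := dfLB.and dfInner2.all
  have dfBIG := (df_pos hlt hadd (Sum.inr 0 : α₁ ⊕ Fin 1)).and
    ((Df.comap dfGLB σ₃).congr fun u => by rw [Set.mem_setOf_eq])
  have dfPre := dfBIG.ex
  have dfFin := dfPre.subst (Sum.elim b v)
  refine dfFin.congr fun y => ?_
  constructor
  · rintro ⟨τ, hpos, ⟨hlb, hmin⟩⟩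
    refine ⟨τ 0, hpos, ?_, ?_⟩
    · rintro z ⟨x, hx, rfl⟩
      exact hlb (Sum.elim x (f x)) ⟨hx.1, rfl, hx.2.1, hx.2.2⟩
    · intro w hw
      refine hmin (fun _ => w) ?_
      intro q hq
      have hfx : f (q ∘ Sum.inl) = q ∘ Sum.inr := hq.2.1
      refine hw ⟨q ∘ Sum.inl, ⟨hq.1, ?_, hq.2.2.2⟩, rfl⟩
      intro j
      rw [congrFun hfx j]
      exact hq.2.2.1 j
  · rintro ⟨t, hpos, hglb⟩
    refine ⟨fun _ => t, hpos, ?_, ?_⟩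
    · intro q hq
      have hfx : f (q ∘ Sum.inl) = q ∘ Sum.inr := hq.2.1
      refine hglb.1 ⟨q ∘ Sum.inl, ⟨hq.1, ?_, hq.2.2.2⟩, rfl⟩
      intro j
      rw [congrFun hfx j]
      exact hq.2.2.1 j
    · intro z hz
      refine hglb.2 ?_
      rintro w ⟨x, hx, rfl⟩
      exact hz (Sum.elim x (f x)) ⟨hx.1, rfl, hx.2.1, hx.2.2⟩

end PstIm2

section Box

variable {M : Type} [Field M] [LinearOrder M] [IsStrictOrderedRing M] [TopologicalSpace M] [OrderTopology M]

theorem exists_pos_lt_all {k : ℕ} (ε : Fin k → M) (hε : ∀ l, 0 < ε l) :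
    ∃ δ, 0 < δ ∧ ∀ l, δ < ε l := by
  induction k with
  | zero => exact ⟨1, one_pos, fun l => l.elim0⟩
  | succ m ih =>
    obtain ⟨δ, hδ, hlt⟩ := ih (fun l => ε l.castSucc) (fun l => hε _)
    have hm : (0:M) < min δ (ε (Fin.last m)) := lt_min hδ (hε _)
    refine ⟨min δ (ε (Fin.last m)) / 2, by linarith, fun l => ?_⟩
    have h1 : min δ (ε (Fin.last m)) / 2 < min δ (ε (Fin.last m)) := by linarith
    by_cases hl : l = Fin.last m
    · subst hl; exact lt_of_lt_of_le h1 (min_le_right _ _)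
    · obtain ⟨l', rfl⟩ := Fin.exists_castSucc_eq.mpr hl
      exact lt_trans (lt_of_lt_of_le h1 (min_le_left _ _)) (hlt l')

theorem box_of_open {k : ℕ} {U : Set (Fin k → M)} (hU : IsOpen U) {p : Fin k → M}
    (hp : p ∈ U) :
    ∃ δ, 0 < δ ∧ ∀ q : Fin k → M, (∀ l, |q l - p l| ≤ δ) → q ∈ U := by
  have hnb : U ∈ nhds p := hU.mem_nhds hp
  rw [nhds_pi, Filter.mem_pi] at hnb
  obtain ⟨I, _, V, hV, hsub⟩ := hnb
  have hIoo : ∀ l, ∃ a b, p l ∈ Set.Ioo a b ∧ Set.Ioo a b ⊆ V l := fun l =>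
    mem_nhds_iff_exists_Ioo_subset.mp (hV l)
  choose a b hab hsubV using hIoo
  obtain ⟨δ, hδ, hlt⟩ := exists_pos_lt_all (fun l => min (p l - a l) (b l - p l))
    (fun l => lt_min (by linarith [(hab l).1]) (by linarith [(hab l).2]))
  refine ⟨δ, hδ, fun q hq => hsub fun l _ => hsubV l ?_⟩
  have h1 := abs_le.mp (hq l)
  have h2 := hlt l
  have h3 : δ < p l - a l := lt_of_lt_of_le h2 (min_le_left _ _)
  have h4 : δ < b l - p l := lt_of_lt_of_le h2 (min_le_right _ _)
  exact ⟨by linarith [h1.2], by linarith [h1.1]⟩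

end Box

section Forward

variable {L : FirstOrder.Language} {M : Type} [L.Structure M] [Field M] [LinearOrder M] [IsStrictOrderedRing M]
  [TopologicalSpace M] [OrderTopology M]
variable {k h : ℕ}

theorem Sc_mono {A : Set (Fin k → M)} {f : (Fin k → M) → (Fin h → M)} {b : Fin h → M}
    {i : ℕ} {v : Fin k → M} {t₁ t₂ : M} (ht : t₁ ≤ t₂) :
    Sc A f b i v t₁ ⊆ Sc A f b i v t₂ := by
  rintro x ⟨h1, h2, h3⟩
  refine ⟨h1, fun j => ⟨le_trans (h2 j).1 (by linarith), le_trans (h2 j).2 (by linarith)⟩,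
    fun l hl => ⟨le_trans (h3 l hl).1 (by linarith), le_trans (h3 l hl).2 (by linarith)⟩⟩

theorem step_lemma (hmin : IsOMin L M)
    (hlt : Set.Definable (Set.univ : Set M) L {p : Fin 2 → M | p 0 < p 1})
    (hadd : Set.Definable (Set.univ : Set M) L {p : Fin 3 → M | p 0 + p 1 = p 2})
    {A : Set (Fin k → M)} (hA : Set.Definable (Set.univ : Set M) L A)
    {r : M} (hr : ∀ p ∈ A, ∀ i, |p i| ≤ r)
    {f : (Fin k → M) → (Fin h → M)}
    (hG : Set.Definable (Set.univ : Set M) L {p : Fin (k + h) → M |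
      f (fun i => p (Fin.castAdd h i)) = fun j => p (Fin.natAdd k j)})
    (b : Fin h → M) {i : ℕ} (hik : i < k) {v : Fin k → M}
    (hne : ∀ t, 0 < t → (Sc A f b i v t).Nonempty) :
    ∃ s : M, ∀ t, 0 < t →
      (Sc A f b (i + 1) (Function.update v ⟨i, hik⟩ s) t).Nonempty := by
  classical
  set i' : Fin k := ⟨i, hik⟩ with hi'
  set P : M → Set M := fun t => (fun x => x i') '' Sc A f b i v t with hP
  have hPne : ∀ t, 0 < t → (P t).Nonempty := fun t ht => ((hne t ht).image _)
  have hPbdd : ∀ t, BddBelow (P t) := by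
    intro t
    refine ⟨-r, ?_⟩
    rintro z ⟨x, hx, rfl⟩
    have := hr x hx.1 i'
    rw [abs_le] at this
    linarith [this.1]
  have hglb : ∀ t, 0 < t → ∃ y, IsGLB (P t) y := fun t ht =>
    exists_isGLB_of_defin hmin (df_Pst hlt hadd hA hG b i i' v t) (hPne t ht) (hPbdd t)
  choose! m hm using hglb
  set Im : Set M := {y | ∃ t, 0 < t ∧ IsGLB (P t) y} with hIm
  have hImne : Im.Nonempty := ⟨m 1, 1, one_pos, hm 1 one_pos⟩
  have hImbdd : BddAbove Im := by
    refine ⟨r, ?_⟩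
    rintro y ⟨t, ht, hy⟩
    obtain ⟨z, hz⟩ := hPne t ht
    have h1 := hy.1 hz
    obtain ⟨x, hx, rfl⟩ := hz
    have hxr := hr x hx.1 i'
    rw [abs_le] at hxr
    linarith [hxr.2]
  have hdefIm : Set.Definable (Set.univ : Set M) L {p : Fin 1 → M | p 0 ∈ Im} :=
    df_Im hlt hadd hA hG b i i' v
  obtain ⟨s, hs⟩ := exists_isLUB_of_defin hmin hdefIm hImne hImbdd
  refine ⟨s, fun t ht => ?_⟩
  -- m is antitone on positives, and bounded by s
  have hms : ∀ t', 0 < t' → m t' ≤ s := fun t' ht' => hs.1 ⟨t', ht', hm t' ht'⟩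
  have hmanti : ∀ t₁ t₂, 0 < t₁ → t₁ ≤ t₂ → m t₂ ≤ m t₁ := by
    intro t₁ t₂ h1 h2
    have hlb : m t₂ ∈ lowerBounds (P t₁) := fun z hz =>
      (hm t₂ (lt_of_lt_of_le h1 h2)).1 (Set.image_mono (Sc_mono h2) hz)
    exact (hm t₁ h1).2 hlb
  -- find t₀ with s - t/2 < m t₀
  have hnotub : ¬ (s - t/2) ∈ upperBounds Im := by
    intro hub
    have := hs.2 hub
    linarith
  obtain ⟨y, hyIm, hy⟩ : ∃ y ∈ Im, s - t/2 < y := by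
    by_contra hcon
    push_neg at hcon
    exact hnotub fun y hy => (hcon y hy)
  obtain ⟨t₀, ht₀, hglb₀⟩ := hyIm
  have hym : y = m t₀ := hglb₀.unique (hm t₀ ht₀)
  set τ : M := min t₀ (t/2) with hτ
  have hτpos : 0 < τ := lt_min ht₀ (by linarith)
  have hmτ : s - t/2 < m τ := by
    have := hmanti τ t₀ hτpos (min_le_left _ _)
    rw [hym] at hy
    linarith
  have hmτs : m τ ≤ s := hms τ hτpos
  -- pick a point z ∈ P τ with z < m τ + t/2
  have hnotlb : ¬ (m τ + t/2) ∈ lowerBounds (P τ) := by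
    intro hlb
    have := (hm τ hτpos).2 hlb
    linarith
  obtain ⟨z, hzP, hz⟩ : ∃ z ∈ P τ, z < m τ + t/2 := by
    by_contra hcon
    push_neg at hcon
    exact hnotlb fun z hz => hcon z hz
  have hzlb : m τ ≤ z := (hm τ hτpos).1 hzP
  obtain ⟨x, hx, rfl⟩ := hzP
  refine ⟨x, hx.1, fun j => ⟨?_, ?_⟩, fun l hl => ?_⟩
  · have := (hx.2.1 j).1
    have hτt : τ ≤ t := le_trans (min_le_right _ _) (by linarith)
    linarith
  · have := (hx.2.1 j).2
    have hτt : τ ≤ t := le_trans (min_le_right _ _) (by linarith)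
    linarith
  · have hτt : τ ≤ t := le_trans (min_le_right _ _) (by linarith)
    by_cases hli : (l : ℕ) < i
    · have h3 := hx.2.2 l hli
      have hlne : l ≠ i' := by
        intro hcon
        rw [hcon] at hli
        exact absurd hli (lt_irrefl i)
      rw [Function.update_of_ne hlne]
      exact ⟨by linarith [h3.1], by linarith [h3.2]⟩
    · have hli' : l = i' := by
        have : (l : ℕ) < i + 1 := hl
        have : (l : ℕ) = i := by omega
        exact Fin.ext (by simp [hi', this])
      subst hli'
      rw [Function.update_self]
      constructor
      · linarith
      · linarith

end Forward

section ForwardMain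

variable {L : FirstOrder.Language} {M : Type} [L.Structure M] [Field M] [LinearOrder M] [IsStrictOrderedRing M]
  [TopologicalSpace M] [OrderTopology M]
variable {k h : ℕ}

theorem forward_main (hmin : IsOMin L M) (hfld : ExpandsField L M)
    {A : Set (Fin k → M)} (hA : Set.Definable (Set.univ : Set M) L A)
    (hAcl : IsClosed A) {r : M} (hr : ∀ p ∈ A, ∀ i, |p i| ≤ r)
    {f : (Fin k → M) → (Fin h → M)}
    (hG : Set.Definable (Set.univ : Set M) L {p : Fin (k + h) → M |
      f (fun i => p (Fin.castAdd h i)) = fun j => p (Fin.natAdd k j)})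
    (hcont : ContinuousOn f A)
    {b : Fin h → M} (hb : b ∈ closure (f '' A)) : b ∈ f '' A := by
  classical
  obtain ⟨hadd, _⟩ := hfld
  have hlt := hmin.1
  -- base case: approximate preimages exist at every scale
  have base : ∀ t, 0 < t → (Sc A f b 0 (fun _ => (0 : M)) t).Nonempty := by
    intro t ht
    have hU : IsOpen (Set.pi Set.univ fun j => Set.Ioo (b j - t) (b j + t)) :=
      isOpen_set_pi Set.finite_univ fun j _ => isOpen_Ioo
    have hbU : b ∈ Set.pi Set.univ fun j => Set.Ioo (b j - t) (b j + t) := by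
      intro j _
      constructor <;> [linarith; linarith]
    obtain ⟨y, hy1, hy2⟩ := mem_closure_iff.mp hb _ hU hbU
    obtain ⟨x, hxA, rfl⟩ := hy2
    refine ⟨x, hxA, fun j => ?_, fun l hl => absurd hl (by omega)⟩
    have := hy1 j (Set.mem_univ j)
    exact ⟨by linarith [this.2], by linarith [this.1]⟩
  -- iterate the step lemma
  have iter : ∀ i : ℕ, i ≤ k →
      ∃ v : Fin k → M, ∀ t, 0 < t → (Sc A f b i v t).Nonempty := by
    intro i
    induction i with
    | zero => exact fun _ => ⟨fun _ => 0, base⟩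
    | succ n ih =>
      intro hik
      obtain ⟨v, hv⟩ := ih (by omega)
      obtain ⟨s, hs⟩ := step_lemma hmin hlt hadd hA hr hG b (by omega : n < k) hv
      exact ⟨_, hs⟩
  obtain ⟨v, hv⟩ := iter k le_rfl
  -- all coordinate constraints are now active
  have hv' : ∀ t, 0 < t → ∃ x ∈ A,
      (∀ j, f x j ≤ b j + t ∧ b j ≤ f x j + t) ∧ ∀ l, |x l - v l| ≤ t := by
    intro t ht
    obtain ⟨x, hx1, hx2, hx3⟩ := hv t ht
    refine ⟨x, hx1, hx2, fun l => ?_⟩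
    have := hx3 l l.isLt
    rw [abs_sub_le_iff]
    exact ⟨by linarith [this.1], by linarith [this.2]⟩
  -- v ∈ A since A is closed
  have hvA : v ∈ A := by
    rw [← hAcl.closure_eq]
    rw [mem_closure_iff]
    intro U hU hvU
    obtain ⟨δ, hδ, hbox⟩ := box_of_open hU hvU
    obtain ⟨x, hxA, _, hxv⟩ := hv' δ hδ
    exact ⟨x, hbox x (fun l => hxv l), hxA⟩
  -- f v = b by continuity
  have hfv : f v = b := by
    funext j
    by_contra hne
    set e : M := |f v j - b j| with he
    have hepos : 0 < e := abs_pos.mpr (sub_ne_zero.mpr hne)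
    have hVnb : (fun y : Fin h → M => y j) ⁻¹'
        Set.Ioo (f v j - e/2) (f v j + e/2) ∈ nhds (f v) := by
      refine (IsOpen.preimage (continuous_apply j) isOpen_Ioo).mem_nhds ?_
      constructor <;> [simp; linarith] <;> linarith
    have hpre := Filter.mem_map.mp ((hcont v hvA) hVnb)
    rw [mem_nhdsWithin] at hpre
    obtain ⟨U, hUopen, hvU, hUsub⟩ := hpre
    obtain ⟨δ, hδ, hbox⟩ := box_of_open hUopen hvU
    have htpos : 0 < min δ (e/4) := lt_min hδ (by linarith)
    obtain ⟨x, hxA, hxf, hxv⟩ := hv' _ htpos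
    have hxU : x ∈ U := hbox x fun l => le_trans (hxv l) (min_le_left _ _)
    have hximg := hUsub ⟨hxU, hxA⟩
    simp only [Set.mem_preimage, Set.mem_Ioo] at hximg
    have h1 : |f x j - b j| ≤ e/4 := by
      rw [abs_sub_le_iff]
      have := hxf j
      have hm : min δ (e/4) ≤ e/4 := min_le_right _ _
      exact ⟨by linarith [this.1], by linarith [this.2]⟩
    have h2 : |f v j - f x j| < e/2 := by
      rw [abs_sub_lt_iff]
      exact ⟨by linarith [hximg.1], by linarith [hximg.2]⟩
    have := abs_sub_le (f v j) (f x j) (b j)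
    rw [← he] at this
    linarith
  exact ⟨v, hvA, hfv⟩

end ForwardMain

section Reverse

variable {L : FirstOrder.Language} {M : Type} [L.Structure M] [Field M] [LinearOrder M] [IsStrictOrderedRing M]
  [TopologicalSpace M] [OrderTopology M]
variable {k : ℕ}

theorem fin_bound {n : ℕ} (R : Fin n → M) : ∃ r, ∀ i, R i ≤ r := by
  induction n with
  | zero => exact ⟨0, fun i => i.elim0⟩
  | succ m ih =>
    obtain ⟨r, hr⟩ := ih fun l => R l.castSucc
    refine ⟨max r (R (Fin.last m)), fun l => ?_⟩
    by_cases hl : l = Fin.last m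
    · subst hl; exact le_max_right _ _
    · obtain ⟨l', rfl⟩ := Fin.exists_castSucc_eq.mpr hl
      exact le_trans (hr l') (le_max_left _ _)

theorem df_graph_id :
    Df L M fun p : Fin (k + k) → M =>
      id (fun i : Fin k => p (Fin.castAdd k i)) = fun j : Fin k => p (Fin.natAdd k j) := by
  refine (Df.all_fin fun i : Fin k =>
    Df.eq (Fin.castAdd k i) (Fin.natAdd k i)).congr fun p => ?_
  rw [funext_iff]
  exact Iff.rfl

theorem df_graph_sq
    (hlt : Set.Definable (Set.univ : Set M) L {p : Fin 2 → M | p 0 < p 1})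
    (hadd : Set.Definable (Set.univ : Set M) L {p : Fin 3 → M | p 0 + p 1 = p 2})
    (hmul : Set.Definable (Set.univ : Set M) L {p : Fin 3 → M | p 0 * p 1 = p 2})
    (i₀ : Fin k) :
    Df L M fun p : Fin (k + 1) → M =>
      (fun x : Fin k → M => (fun _ : Fin 1 => (x i₀)^2 / (1 + (x i₀)^2)))
          (fun i : Fin k => p (Fin.castAdd 1 i)) =
        fun j : Fin 1 => p (Fin.natAdd k j) := by
  classical
  set a : Fin (k + 1) := Fin.castAdd 1 i₀ with ha
  set c : Fin (k + 1) := Fin.natAdd k 0 with hc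
  have inner : Df L M fun u : Fin (k + 1) ⊕ Fin 2 → M =>
      (u (Sum.inl a) * u (Sum.inl a) = u (Sum.inr 0)) ∧
      (u (Sum.inl c) * u (Sum.inr 0) = u (Sum.inr 1)) ∧
      (u (Sum.inl c) + u (Sum.inr 1) = u (Sum.inr 0)) :=
    (df_mul hmul _ _ _).and ((df_mul hmul _ _ _).and (df_add hadd _ _ _))
  refine inner.ex.congr fun p => ?_
  have hpos : (0:M) < 1 + (p a)^2 := by positivity
  constructor
  · rintro ⟨q, h1, h2, h3⟩
    funext j
    have hj : j = 0 := Subsingleton.elim j 0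
    subst hj
    show (p a)^2 / (1 + (p a)^2) = p c
    rw [div_eq_iff (ne_of_gt hpos)]
    simp only [Sum.elim_inl, Sum.elim_inr] at h1 h2 h3
    nlinarith [h1, h2, h3, pow_two (p a)]
  · intro hEq
    have h0 : (p a)^2 / (1 + (p a)^2) = p c := congrFun hEq 0
    rw [div_eq_iff (ne_of_gt hpos)] at h0
    refine ⟨![p a * p a, p c * (p a * p a)], by simp, by simp, ?_⟩
    show p c + ![p a * p a, p c * (p a * p a)] 1 = ![p a * p a, p c * (p a * p a)] 0
    simp only [Matrix.cons_val_one, Matrix.head_cons, Matrix.cons_val_zero]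
    nlinarith [h0, pow_two (p a)]

end Reverse

/-- Let `M` be an o-minimal expansion of a real closed field and `A ⊆ Mᵏ` definable. Then
`A` is definably compact (closed and bounded) iff for every definable `B` and every
definable continuous `f : A → B`, the image `f(A)` is closed in `B`. -/
theorem stmt17 {L : FirstOrder.Language} {M : Type} [L.Structure M]
    [Field M] [LinearOrder M] [IsStrictOrderedRing M] [TopologicalSpace M] [OrderTopology M]
    (hmin : IsOMin L M) (hfld : ExpandsField L M)
    {k : ℕ} (A : Set (Fin k → M)) (hA : Defin L M A) :
    (IsClosed A ∧ ∃ r : M, ∀ p ∈ A, ∀ i, |p i| ≤ r) ↔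
      ∀ (h : ℕ) (B : Set (Fin h → M)) (f : (Fin k → M) → (Fin h → M)),
        Defin L M B →
        Defin L M {p : Fin (k + h) → M |
          f (fun i => p (Fin.castAdd h i)) = fun j => p (Fin.natAdd k j)} →
        ContinuousOn f A → Set.MapsTo f A B →
        closure (f '' A) ∩ B ⊆ f '' A := by
  constructor
  · rintro ⟨hAcl, r, hr⟩ h B f _ hG hcont _
    rintro y ⟨hyc, _⟩
    exact forward_main hmin hfld hA hAcl hr hG hcont hyc
  · intro H
    constructor
    · -- closedness via the identity map
      have hid := H k Set.univ id Set.definable_univ df_graph_id continuousOn_id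
        (fun x _ => Set.mem_univ _)
      rw [Set.image_id] at hid
      exact isClosed_of_closure_subset fun x hx => hid ⟨hx, Set.mem_univ x⟩
    · -- boundedness via the squashing map
      by_contra hnb
      push_neg at hnb
      have hcoord : ∃ i₀ : Fin k, ∀ r, ∃ p ∈ A, r < |p i₀| := by
        by_contra hcon
        push_neg at hcon
        choose R hR using hcon
        obtain ⟨r, hr⟩ := fin_bound R
        obtain ⟨p, hp, i, hi⟩ := hnb r
        exact absurd (le_trans (hR i p hp) (hr i)) (not_le.mpr hi)
      obtain ⟨i₀, hi₀⟩ := hcoord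
      set g : (Fin k → M) → (Fin 1 → M) :=
        fun x => fun _ : Fin 1 => (x i₀)^2 / (1 + (x i₀)^2) with hg
      have hsqc : Continuous fun u : M => u^2 / (1 + u^2) :=
        Continuous.div (by fun_prop) (by fun_prop) (fun x => by positivity)
      have hgc : ContinuousOn g A :=
        (continuous_pi fun _ => hsqc.comp (continuous_apply i₀)).continuousOn
      have hH := H 1 Set.univ g Set.definable_univ
        (df_graph_sq hmin.1 hfld.1 hfld.2 i₀) hgc (fun x _ => Set.mem_univ _)
      have hone : (fun _ : Fin 1 => (1:M)) ∈ closure (g '' A) := by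
        rw [mem_closure_iff]
        intro U hU hoU
        obtain ⟨δ, hδ, hbox⟩ := box_of_open hU hoU
        obtain ⟨p, hpA, hp⟩ := hi₀ (max 1 (1/δ))
        refine ⟨g p, hbox _ fun l => ?_, Set.mem_image_of_mem g hpA⟩
        set u : M := p i₀ with hu
        have hpos : (0:M) < 1 + u^2 := by positivity
        have hu1 : 1 < |u| := lt_of_le_of_lt (le_max_left _ _) hp
        have hud : 1 / δ < |u| := lt_of_le_of_lt (le_max_right _ _) hp
        have h2 : 1 < |u| * δ := (div_lt_iff₀ hδ).mp hud
        have h3 : |u| ≤ u^2 := by nlinarith [sq_abs u]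
        have h4 : 1 - u^2/(1+u^2) ≤ δ := by
          have key : 1 - u^2/(1+u^2) = 1/(1+u^2) := by field_simp; ring
          rw [key, div_le_iff₀ hpos]
          nlinarith [h2, h3, hδ]
        have h5 : u^2/(1+u^2) < 1 := by
          rw [div_lt_one hpos]; linarith
        show |g p l - 1| ≤ δ
        have hgl : g p l = u^2/(1+u^2) := rfl
        rw [hgl, abs_le]
        exact ⟨by linarith [h4], by linarith [h5, hδ]⟩
      have hmem := hH ⟨hone, Set.mem_univ _⟩
      obtain ⟨x, _, hx⟩ := hmem
      have hx0 : (x i₀)^2 / (1 + (x i₀)^2) = 1 := congrFun hx 0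
      have hpos : (0:M) < 1 + (x i₀)^2 := by positivity
      rw [div_eq_one_iff_eq (ne_of_gt hpos)] at hx0
      linarith
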